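/- Let K be a contraction on a Hilbert space H (‖K‖ ≤ 1). Define the Schaeffer-type operator S on H ⊕ H ⊕ H ⊕ ⋯ (the countable Hilbert space direct sum of copies of H) by S(x₀, x₁, x₂, …) = (K x₀, D x₀, x₁, x₂, …), where D = (1 - K* K)^{1/2}. Then S is an isometry, and the compression of S to the first coordinate equals K; moreover the first copy of H is coinvariant in the sense that S*(x, 0, 0, …) = (K* x, 0, 0, …). -/

import Mathlib

/-- Schaeffer-type dilation.  Let `K` be a contraction on `H`, `D = (1 - K*K)^{1/2}`,
and let `S` act on the ℓ²-direct sum `⊕_{n ≥ 0} H` by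
`S(x₀, x₁, x₂, …) = (K x₀, D x₀, x₁, x₂, …)`.  Then `S` is an isometry, its
compression to the first coordinate is `K`, and the first copy of `H` is
coinvariant: `S*(x, 0, 0, …) = (K* x, 0, 0, …)`. -/
theorem stmt_3 {H : Type*} [NormedAddCommGroup H] [InnerProductSpace ℂ H] [CompleteSpace H]
    (K D : H →L[ℂ] H) (hK : ‖K‖ ≤ 1)
    (hDsa : D.adjoint = D) (hD : D.comp D = 1 - K.adjoint.comp K)
    (S : lp (fun _ : ℕ => H) 2 →L[ℂ] lp (fun _ : ℕ => H) 2)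
    (hS0 : ∀ x : lp (fun _ : ℕ => H) 2, (S x) 0 = K (x 0))
    (hS1 : ∀ x : lp (fun _ : ℕ => H) 2, (S x) 1 = D (x 0))
    (hS2 : ∀ (x : lp (fun _ : ℕ => H) 2) (k : ℕ), (S x) (k + 2) = x (k + 1)) :
    (∀ x, ‖S x‖ = ‖x‖) ∧
      (∀ v : H, (S (lp.single 2 0 v)) 0 = K v) ∧
      ∀ v : H, S.adjoint (lp.single 2 0 v) = lp.single 2 0 (K.adjoint v) := by
  have key : ∀ x y : lp (fun _ : ℕ => H) 2, (inner ℂ (S x) (S y) : ℂ) = inner ℂ x y := by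
    intro x y
    rw [lp.inner_eq_tsum, lp.inner_eq_tsum]
    have hs1 : Summable fun n => (inner ℂ ((S x) n) ((S y) n) : ℂ) :=
      lp.summable_inner (S x) (S y)
    have hs2 : Summable fun n => (inner ℂ (x n) (y n) : ℂ) := lp.summable_inner x y
    rw [Summable.tsum_eq_zero_add hs1, Summable.tsum_eq_zero_add ((summable_nat_add_iff 1).2 hs1),
      Summable.tsum_eq_zero_add hs2]
    have h01 : (inner ℂ ((S x) 0) ((S y) 0) : ℂ) + inner ℂ ((S x) (0 + 1)) ((S y) (0 + 1))
        = inner ℂ (x 0) (y 0) := by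
      simp only [hS0, hS1, zero_add]
      rw [← ContinuousLinearMap.adjoint_inner_right K, ← ContinuousLinearMap.adjoint_inner_right D,
        hDsa, ← inner_add_right]
      congr 1
      have h := congrArg (fun T : H →L[ℂ] H => T (y 0)) hD
      simp only [ContinuousLinearMap.comp_apply, ContinuousLinearMap.sub_apply,
        ContinuousLinearMap.one_apply] at h
      rw [h]
      abel
    have htail : (∑' n : ℕ, (inner ℂ ((S x) (n + 1 + 1)) ((S y) (n + 1 + 1)) : ℂ))
        = ∑' n : ℕ, (inner ℂ (x (n + 1)) (y (n + 1)) : ℂ) := by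
      congr 1; funext n; rw [hS2 x n, hS2 y n]
    calc inner ℂ ((S x) 0) ((S y) 0) + ((inner ℂ ((S x) (0+1)) ((S y) (0+1)) : ℂ) +
          ∑' n : ℕ, (inner ℂ ((S x) (n + 1 + 1)) ((S y) (n + 1 + 1)) : ℂ))
        = (inner ℂ ((S x) 0) ((S y) 0) + inner ℂ ((S x) (0+1)) ((S y) (0+1))) +
          ∑' n : ℕ, (inner ℂ ((S x) (n + 1 + 1)) ((S y) (n + 1 + 1)) : ℂ) := by ring
      _ = inner ℂ (x 0) (y 0) + ∑' n : ℕ, (inner ℂ (x (n + 1)) (y (n + 1)) : ℂ) := by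
          rw [h01, htail]
  refine ⟨?_, ?_, ?_⟩
  · intro x
    have h := key x x
    rw [inner_self_eq_norm_sq_to_K (𝕜 := ℂ), inner_self_eq_norm_sq_to_K (𝕜 := ℂ)] at h
    have h' : ‖S x‖ ^ 2 = ‖x‖ ^ 2 := by exact_mod_cast h
    nlinarith [norm_nonneg (S x), norm_nonneg x]
  · intro v
    simp [hS0, lp.single_apply]
  · intro v
    apply ext_inner_right ℂ
    intro y
    rw [ContinuousLinearMap.adjoint_inner_left, lp.inner_single_left, lp.inner_single_left,
      hS0, ContinuousLinearMap.adjoint_inner_left]
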